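/- Consider the region swap game with n = 10, k = 8, move vectors r1 = (1,1,1,0,0,0,1,0,1,0), r2 = (0,1,1,0,0,1,0,1,1,0), r3 = (0,0,0,1,1,0,1,1,0,1), r4 = (1,0,0,1,1,1,0,0,0,1), r5 = (0,0,1,0,0,1,0,1,1,1), r6 = (1,0,0,1,1,0,1,0,0,1), r7 = (1,1,0,1,1,1,0,0,0,0), r8 = (0,1,1,0,0,0,1,1,1,0) in (ZMod 2)^{10}, and winning set W = {V0¹, V0², V0³, V0⁴} where V0¹ = (0,1,0,0,1,1,0,0,1,1), V0² = (1,0,1,1,0,0,1,1,0,0), V0³ = (0,1,0,0,1,0,1,0,1,1), V0⁴ = (1,0,1,1,0,1,0,1,0,0). Then for every k ∈ {1,2,3,4}, taking the initial state V0 = V0ᵏ, Player C moving second has a winning strategy. -/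
import Mathlib

def CWins {k n : ℕ} (r : Fin k → Fin n → ZMod 2) (W : Set (Fin n → ZMod 2)) :
    ℕ → Finset (Fin k) → (Fin n → ZMod 2) → Bool → Prop
  | 0, _, v, _ => v ∈ W
  | m + 1, used, v, true => ∃ i : Fin k, i ∉ used ∧ ∃ ε : ZMod 2,
      CWins r W m (insert i used) (v + ε • r i) false
  | m + 1, used, v, false => ∀ i : Fin k, i ∉ used → ∀ ε : ZMod 2,
      CWins r W m (insert i used) (v + ε • r i) true

def kleinMoves : Fin 8 → Fin 10 → ZMod 2 :=
  ![![1, 1, 1, 0, 0, 0, 1, 0, 1, 0], ![0, 1, 1, 0, 0, 1, 0, 1, 1, 0],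
    ![0, 0, 0, 1, 1, 0, 1, 1, 0, 1], ![1, 0, 0, 1, 1, 1, 0, 0, 0, 1],
    ![0, 0, 1, 0, 0, 1, 0, 1, 1, 1], ![1, 0, 0, 1, 1, 0, 1, 0, 0, 1],
    ![1, 1, 0, 1, 1, 1, 0, 0, 0, 0], ![0, 1, 1, 0, 0, 0, 1, 1, 1, 0]]

def kleinW : Set (Fin 10 → ZMod 2) :=
  {![0, 1, 0, 0, 1, 1, 0, 0, 1, 1], ![1, 0, 1, 1, 0, 0, 1, 1, 0, 0],
    ![0, 1, 0, 0, 1, 0, 1, 0, 1, 1], ![1, 0, 1, 1, 0, 1, 0, 1, 0, 0]}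

/-- The pairing (involution) used by player C. -/
def kp : Fin 8 → Fin 8 := ![2, 3, 0, 1, 6, 7, 4, 5]

lemma kp_kp : ∀ i, kp (kp i) = i := by decide

lemma kp_ne : ∀ i, kp i ≠ i := by decide

/-- The four winning vectors, as a function. -/
def kw : Fin 4 → Fin 10 → ZMod 2 :=
  ![![0, 1, 0, 0, 1, 1, 0, 0, 1, 1], ![1, 0, 1, 1, 0, 0, 1, 1, 0, 0],
    ![0, 1, 0, 0, 1, 0, 1, 0, 1, 1], ![1, 0, 1, 1, 0, 1, 0, 1, 0, 0]]

lemma mem_kleinW_iff (v : Fin 10 → ZMod 2) : v ∈ kleinW ↔ ∃ w : Fin 4, v = kw w := by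
  constructor
  · intro h
    rcases h with h | h | h | h
    · exact ⟨0, h⟩
    · exact ⟨1, h⟩
    · exact ⟨2, h⟩
    · exact ⟨3, h⟩
  · rintro ⟨w, rfl⟩
    fin_cases w
    · exact Or.inl rfl
    · exact Or.inr (Or.inl rfl)
    · exact Or.inr (Or.inr (Or.inl rfl))
    · exact Or.inr (Or.inr (Or.inr rfl))

lemma kw_step : ∀ w : Fin 4, ∀ i : Fin 8, ∀ ε : ZMod 2,
    ∃ w' : Fin 4, kw w + ε • kleinMoves i + ε • kleinMoves (kp i) = kw w' := by
  decide

lemma key_step (v : Fin 10 → ZMod 2) (hv : v ∈ kleinW) (i : Fin 8) (ε : ZMod 2) :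
    v + ε • kleinMoves i + ε • kleinMoves (kp i) ∈ kleinW := by
  rw [mem_kleinW_iff] at hv ⊢
  obtain ⟨w, rfl⟩ := hv
  exact kw_step w i ε

lemma pairing_strategy : ∀ m : ℕ, ∀ used : Finset (Fin 8), ∀ v : Fin 10 → ZMod 2,
    (∀ i, i ∈ used → kp i ∈ used) → v ∈ kleinW →
    CWins kleinMoves kleinW (2 * m) used v false := by
  intro m
  induction m with
  | zero => intro used v _ hv; exact hv
  | succ m ih =>
    intro used v hclosed hv
    have h2 : 2 * (m + 1) = 2 * m + 1 + 1 := by ring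
    rw [h2]
    intro i hi ε
    refine ⟨kp i, ?_, ε, ?_⟩
    · simp only [Finset.mem_insert, not_or]
      refine ⟨kp_ne i, fun h => hi ?_⟩
      have := hclosed _ h
      rwa [kp_kp] at this
    · have hv' : v + ε • kleinMoves i + ε • kleinMoves (kp i) ∈ kleinW :=
        key_step v hv i ε
      apply ih
      · intro j hj
        simp only [Finset.mem_insert] at hj ⊢
        rcases hj with rfl | rfl | hj
        · exact Or.inr (Or.inl (kp_kp i))
        · exact Or.inl rfl
        · exact Or.inr (Or.inr (hclosed _ hj))
      · exact hv'

theorem stmt_12 : ∀ V0 ∈ kleinW, CWins kleinMoves kleinW 8 ∅ V0 false := by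
  intro V0 hV0
  exact pairing_strategy 4 ∅ V0 (by simp) hV0
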